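/- arXiv:2305.17288 — 2 statements merged into one kernel-verified Lean document; each statement's English description precedes it below -/
import Mathlib

section
/- Let κ > 0 and n ≥ 2. Define J(r) = (2/√κ)·arcsin(√((n+1)/(2n))·sin(√κ·r)) for r ∈ (0, π/(4√κ)). Then the function r ↦ J(r)/r is strictly decreasing on (0, π/(4√κ)). -/
open Real

/-- For `κ > 0`, `n ≥ 2`, the function `r ↦ J(r)/r` with
`J(r) = (2/√κ)·arcsin(√((n+1)/(2n))·sin(√κ·r))` is strictly decreasing on `(0, π/(4√κ))`. -/
theorem J_div_r_strictAnti (κ : ℝ) (hκ : 0 < κ) (n : ℕ) (hn : 2 ≤ n) :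
    StrictAntiOn
      (fun r : ℝ =>
        ((2 / Real.sqrt κ) *
          Real.arcsin (Real.sqrt (((n : ℝ) + 1) / (2 * n)) * Real.sin (Real.sqrt κ * r))) / r)
      (Set.Ioo 0 (Real.pi / (4 * Real.sqrt κ))) := by
  have hs : (0:ℝ) < Real.sqrt κ := Real.sqrt_pos.2 hκ
  have hn' : (2:ℝ) ≤ n := by exact_mod_cast hn
  set c : ℝ := Real.sqrt (((n : ℝ) + 1) / (2 * n)) with hc
  have hcpos : 0 < c := Real.sqrt_pos.2 (by positivity)
  have hc1 : c < 1 := by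
    have hlt : ((n:ℝ) + 1) / (2 * n) < 1 := by
      rw [div_lt_one (by positivity)]; linarith
    calc c < Real.sqrt 1 := Real.sqrt_lt_sqrt (by positivity) hlt
      _ = 1 := Real.sqrt_one
  set h : ℝ → ℝ := fun s => Real.arcsin (c * Real.sin s) with hH
  have habs : ∀ s : ℝ, |c * Real.sin s| < 1 := by
    intro s
    rw [abs_mul, abs_of_pos hcpos]
    calc c * |Real.sin s| ≤ c * 1 := by
          exact mul_le_mul_of_nonneg_left (Real.abs_sin_le_one s) hcpos.le
      _ < 1 := by linarith
  have hsq : ∀ s : ℝ, (0:ℝ) < 1 - (c * Real.sin s) ^ 2 := by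
    intro s
    have := habs s
    nlinarith [abs_nonneg (c * Real.sin s), sq_abs (c * Real.sin s)]
  have hderiv : ∀ s : ℝ,
      HasDerivAt h (c * Real.cos s / Real.sqrt (1 - (c * Real.sin s) ^ 2)) s := by
    intro s
    have h1 : c * Real.sin s ≠ -1 := by
      intro hcontra; have := habs s; rw [hcontra] at this; simp at this
    have h2 : c * Real.sin s ≠ 1 := by
      intro hcontra; have := habs s; rw [hcontra] at this; simp at this
    have hin : HasDerivAt (fun s : ℝ => c * Real.sin s) (c * Real.cos s) s :=
      (Real.hasDerivAt_sin s).const_mul c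
    have := (Real.hasDerivAt_arcsin h1 h2).comp s hin
    exact this.congr_deriv (by ring)
  have hderiv' : ∀ s : ℝ, deriv h s = c * Real.cos s / Real.sqrt (1 - (c * Real.sin s) ^ 2) :=
    fun s => (hderiv s).deriv
  -- strict concavity of h on [0, π/4]
  have hconc : StrictConcaveOn ℝ (Set.Icc 0 (Real.pi / 4)) h := by
    apply StrictAntiOn.strictConcaveOn_of_deriv (convex_Icc _ _)
    · exact fun s _ => ((hderiv s).continuousAt).continuousWithinAt
    · rw [interior_Icc]
      intro x hx y hy hxy
      rw [hderiv' x, hderiv' y]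
      have hx0 : 0 < x := hx.1
      have hxp : x < Real.pi / 2 := lt_trans hx.2 (by linarith [Real.pi_pos])
      have hyp : y < Real.pi / 2 := lt_trans hy.2 (by linarith [Real.pi_pos])
      have hsx : 0 < Real.sin x := Real.sin_pos_of_pos_of_lt_pi hx0 (by linarith [Real.pi_pos])
      have hcx : 0 < Real.cos x := Real.cos_pos_of_mem_Ioo ⟨by linarith, hxp⟩
      have hcy : 0 < Real.cos y := Real.cos_pos_of_mem_Ioo ⟨by linarith, hyp⟩
      have hsxy : Real.sin x < Real.sin y := by
        apply Real.sin_lt_sin_of_lt_of_le_pi_div_two (by linarith) (le_of_lt hyp) hxy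
      have hA : 0 < Real.sqrt (1 - (c * Real.sin x) ^ 2) := Real.sqrt_pos.2 (hsq x)
      have hB : 0 < Real.sqrt (1 - (c * Real.sin y) ^ 2) := Real.sqrt_pos.2 (hsq y)
      rw [div_lt_div_iff₀ hB hA]
      have hsqA : (Real.sqrt (1 - (c * Real.sin x) ^ 2)) ^ 2 = 1 - (c * Real.sin x) ^ 2 :=
        Real.sq_sqrt (hsq x).le
      have hsqB : (Real.sqrt (1 - (c * Real.sin y) ^ 2)) ^ 2 = 1 - (c * Real.sin y) ^ 2 :=
        Real.sq_sqrt (hsq y).le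
      apply lt_of_pow_lt_pow_left₀ 2 (by positivity)
      have hpy : Real.sin x ^ 2 + Real.cos x ^ 2 = 1 := Real.sin_sq_add_cos_sq x
      have hpy' : Real.sin y ^ 2 + Real.cos y ^ 2 = 1 := Real.sin_sq_add_cos_sq y
      have key : (c * Real.cos y) ^ 2 * (1 - (c * Real.sin x) ^ 2) <
          (c * Real.cos x) ^ 2 * (1 - (c * Real.sin y) ^ 2) := by
        have hsub : 0 < 1 - c ^ 2 := by nlinarith
        have hsum : 0 < Real.sin x + Real.sin y := by linarith
        have hbig : 0 < c ^ 2 * ((1 - c ^ 2) * ((Real.sin y - Real.sin x) * (Real.sin x + Real.sin y))) :=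
          mul_pos (by positivity) (mul_pos hsub (mul_pos (by linarith) hsum))
        have hcx2 : Real.cos x ^ 2 = 1 - Real.sin x ^ 2 := by linarith
        have hcy2 : Real.cos y ^ 2 = 1 - Real.sin y ^ 2 := by linarith
        have e : (c * Real.cos x) ^ 2 * (1 - (c * Real.sin y) ^ 2) -
            (c * Real.cos y) ^ 2 * (1 - (c * Real.sin x) ^ 2) =
            c ^ 2 * ((1 - c ^ 2) * ((Real.sin y - Real.sin x) * (Real.sin x + Real.sin y))) := by
          linear_combination (c ^ 2 * (1 - c ^ 2 * Real.sin y ^ 2)) * hcx2 -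
            (c ^ 2 * (1 - c ^ 2 * Real.sin x ^ 2)) * hcy2
        linarith
      calc (c * Real.cos y * Real.sqrt (1 - (c * Real.sin x) ^ 2)) ^ 2
          = (c * Real.cos y) ^ 2 * (1 - (c * Real.sin x) ^ 2) := by
            rw [mul_pow (c * Real.cos y), hsqA]
        _ < (c * Real.cos x) ^ 2 * (1 - (c * Real.sin y) ^ 2) := key
        _ = (c * Real.cos x * Real.sqrt (1 - (c * Real.sin y) ^ 2)) ^ 2 := by
            rw [mul_pow (c * Real.cos x), hsqB]
  have h0 : h 0 = 0 := by simp [hH]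
  -- key slope inequality
  have key : ∀ x y : ℝ, x ∈ Set.Ioo 0 (Real.pi / 4) → y ∈ Set.Ioo 0 (Real.pi / 4) →
      x < y → h y / y < h x / x := by
    intro x y hx hy hxy
    have hx0 : 0 < x := hx.1
    have hy0 : 0 < y := hy.1
    have hmem0 : (0:ℝ) ∈ Set.Icc (0:ℝ) (Real.pi / 4) :=
      ⟨le_refl 0, by positivity⟩
    have hmemy : y ∈ Set.Icc (0:ℝ) (Real.pi / 4) := ⟨hy0.le, hy.2.le⟩
    have hne : (0:ℝ) ≠ y := hy0.ne
    have hslope := hconc.2 hmem0 hmemy hne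
      (show (0:ℝ) < 1 - x / y by
        have : x / y < 1 := (div_lt_one hy0).2 hxy
        linarith)
      (show (0:ℝ) < x / y by positivity)
      (show (1 - x / y) + x / y = 1 by ring)
    have heq : (1 - x / y) • (0:ℝ) + (x / y) • y = x := by
      rw [smul_eq_mul, smul_eq_mul, mul_zero, zero_add, div_mul_cancel₀ x hy0.ne']
    rw [heq, h0] at hslope
    have hxgt : x / y * h y < h x := by
      simpa using hslope
    rw [div_lt_div_iff₀ hy0 hx0]
    have h2 := mul_lt_mul_of_pos_right hxgt hy0
    have h3 : x / y * h y * y = h y * x := by field_simp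
    linarith
  -- conclusion
  intro a ha b hb hab
  have hx : Real.sqrt κ * a ∈ Set.Ioo 0 (Real.pi / 4) := by
    constructor
    · exact mul_pos hs ha.1
    · have := ha.2
      have h2 : Real.sqrt κ * a < Real.sqrt κ * (Real.pi / (4 * Real.sqrt κ)) :=
        mul_lt_mul_of_pos_left this hs
      calc Real.sqrt κ * a < Real.sqrt κ * (Real.pi / (4 * Real.sqrt κ)) := h2
        _ = Real.pi / 4 := by field_simp
  have hy : Real.sqrt κ * b ∈ Set.Ioo 0 (Real.pi / 4) := by
    constructor
    · exact mul_pos hs hb.1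
    · have := hb.2
      have h2 : Real.sqrt κ * b < Real.sqrt κ * (Real.pi / (4 * Real.sqrt κ)) :=
        mul_lt_mul_of_pos_left this hs
      calc Real.sqrt κ * b < Real.sqrt κ * (Real.pi / (4 * Real.sqrt κ)) := h2
        _ = Real.pi / 4 := by field_simp
  have hxy : Real.sqrt κ * a < Real.sqrt κ * b := mul_lt_mul_of_pos_left hab hs
  have hk := key _ _ hx hy hxy
  have ha0 : 0 < a := ha.1
  have hb0 : 0 < b := hb.1
  have e1 : ∀ r : ℝ, 0 < r →
      ((2 / Real.sqrt κ) * Real.arcsin (c * Real.sin (Real.sqrt κ * r))) / r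
        = 2 * (h (Real.sqrt κ * r) / (Real.sqrt κ * r)) := by
    intro r hr
    rw [hH]
    field_simp
  dsimp only
  rw [e1 a ha0, e1 b hb0]
  linarith
end

section
/- Let κ > 0 and n ≥ 2, and let J(r) = (2/√κ)·arcsin(√((n+1)/(2n))·sin(√κ·r)). Then for every r ∈ (0, π/(4√κ)], we have J(r)/r ≥ 4/3. -/
open Real

lemma key_sin (t : ℝ) (ht0 : 0 < t) (ht1 : t ≤ Real.pi / 4) :
    Real.sqrt 2 * Real.sin (2 * t / 3) ≤ Real.sin t := by
  have h3 : t = 3 * (t / 3) := by ring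
  have hx : 0 ≤ Real.sin (t / 3) := by
    apply Real.sin_nonneg_of_nonneg_of_le_pi <;> nlinarith [Real.pi_pos, Real.pi_le_four]
  have hc : Real.cos (Real.pi / 12) ≤ Real.cos (t / 3) := by
    apply Real.cos_le_cos_of_nonneg_of_le_pi <;> nlinarith [Real.pi_pos]
  have hcv : Real.cos (Real.pi / 12) = (Real.sqrt 6 + Real.sqrt 2) / 4 := by
    have : Real.pi / 12 = Real.pi / 3 - Real.pi / 4 := by ring
    rw [this, Real.cos_sub, Real.cos_pi_div_three, Real.sin_pi_div_three,
      Real.cos_pi_div_four, Real.sin_pi_div_four]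
    rw [show (6 : ℝ) = 2 * 3 by norm_num, Real.sqrt_mul (by norm_num)]
    ring
  rw [hcv] at hc
  set c := Real.cos (t / 3) with hcdef
  have hquad : 4 * c ^ 2 - 2 * Real.sqrt 2 * c - 1 ≥ 0 := by
    nlinarith [Real.sq_sqrt (by norm_num : (2:ℝ) ≥ 0), Real.sq_sqrt (by norm_num : (6:ℝ) ≥ 0),
      Real.sqrt_nonneg 2, Real.sqrt_nonneg 6,
      sq_nonneg (Real.sqrt 6 - Real.sqrt 2), sq_nonneg (Real.sqrt 6 + Real.sqrt 2)]
  have hsin3 : Real.sin t = 3 * Real.sin (t / 3) - 4 * Real.sin (t / 3) ^ 3 := by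
    nth_rewrite 1 [h3]; rw [Real.sin_three_mul]
  have hsin2 : Real.sin (2 * t / 3) = 2 * Real.sin (t / 3) * c := by
    rw [show 2 * t / 3 = 2 * (t / 3) by ring, Real.sin_two_mul]
  have hpyth : Real.sin (t / 3) ^ 2 + c ^ 2 = 1 := Real.sin_sq_add_cos_sq _
  rw [hsin3, hsin2]
  nlinarith [mul_nonneg hx hquad]

/-- For `κ > 0`, `n ≥ 2`, and `r ∈ (0, π/(4√κ)]`, we have `J(r)/r ≥ 4/3` where
`J(r) = (2/√κ)·arcsin(√((n+1)/(2n))·sin(√κ·r))`. -/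
theorem J_div_r_ge (κ : ℝ) (hκ : 0 < κ) (n : ℕ) (hn : 2 ≤ n) (r : ℝ)
    (hr : r ∈ Set.Ioc 0 (Real.pi / (4 * Real.sqrt κ))) :
    ((2 / Real.sqrt κ) *
        Real.arcsin (Real.sqrt (((n : ℝ) + 1) / (2 * n)) * Real.sin (Real.sqrt κ * r))) / r
      ≥ 4 / 3 := by
  obtain ⟨hr0, hr1⟩ := hr
  have hs : 0 < Real.sqrt κ := Real.sqrt_pos.mpr hκ
  set t := Real.sqrt κ * r with htdef
  have ht0 : 0 < t := mul_pos hs hr0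
  have ht1 : t ≤ Real.pi / 4 := by
    calc t = Real.sqrt κ * r := rfl
    _ ≤ Real.sqrt κ * (Real.pi / (4 * Real.sqrt κ)) := by
        exact mul_le_mul_of_nonneg_left hr1 hs.le
    _ = Real.pi / 4 := by field_simp
  have hsin_pos : 0 < Real.sin t := by
    apply Real.sin_pos_of_pos_of_lt_pi ht0
    nlinarith [Real.pi_pos]
  -- the coefficient
  have hn' : (2 : ℝ) ≤ (n : ℝ) := by exact_mod_cast hn
  have hcoef : Real.sqrt 2 / 2 ≤ Real.sqrt (((n : ℝ) + 1) / (2 * n)) := by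
    have h2 : Real.sqrt 2 / 2 = Real.sqrt (1 / 2) := by
      rw [one_div, Real.sqrt_inv, Real.sqrt_div_self', one_div]
    rw [h2]
    apply Real.sqrt_le_sqrt
    rw [div_le_div_iff₀ (by norm_num) (by nlinarith)]
    nlinarith
  have hkey : Real.sin (2 * t / 3) ≤ Real.sqrt 2 / 2 * Real.sin t := by
    have := key_sin t ht0 ht1
    have h2 : (0:ℝ) < Real.sqrt 2 := Real.sqrt_pos.mpr (by norm_num)
    have hsq : Real.sqrt 2 * Real.sqrt 2 = 2 := Real.mul_self_sqrt (by norm_num)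
    nlinarith
  have harcsin : (2 : ℝ) / 3 * t ≤
      Real.arcsin (Real.sqrt (((n : ℝ) + 1) / (2 * n)) * Real.sin t) := by
    have heq : (2 : ℝ) / 3 * t = Real.arcsin (Real.sin (2 * t / 3)) := by
      rw [Real.arcsin_sin (by nlinarith [Real.pi_pos]) (by nlinarith [Real.pi_pos])]
      ring
    rw [heq]
    apply Real.monotone_arcsin
    calc Real.sin (2 * t / 3) ≤ Real.sqrt 2 / 2 * Real.sin t := hkey
    _ ≤ Real.sqrt (((n : ℝ) + 1) / (2 * n)) * Real.sin t :=
        mul_le_mul_of_nonneg_right hcoef hsin_pos.le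
  rw [ge_iff_le, le_div_iff₀ hr0]
  calc (4:ℝ) / 3 * r = 2 / Real.sqrt κ * (2 / 3 * t) := by
        rw [htdef]; field_simp; ring
  _ ≤ _ := by
      apply mul_le_mul_of_nonneg_left harcsin
      positivity
end
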